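/- Let R be a commutative semilocal ring such that every prime ideal of R is a direct sum of cyclic R-modules. Then R is a Noetherian ring if and only if every maximal ideal of R is finitely generated. -/

import Mathlib

/-- An ideal `P` of a commutative ring `R` is an internal direct sum of cyclic
`R`-modules: there is a family of elements of `P` whose cyclic spans are
independent and whose supremum is `P`. -/
def IsDirectSumOfCyclics {R : Type} [CommRing R] (P : Ideal R) : Prop :=
  ∃ (ι : Type) (w : ι → R), (∀ i, w i ∈ P) ∧
    iSupIndep (fun i => Ideal.span {w i}) ∧ (⨆ i, Ideal.span {w i}) = P


open Ideal Submodule Set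

theorem cohen' {R : Type} [CommRing R] (hp : ∀ P : Ideal R, P.IsPrime → P.FG) :
    IsNoetherianRing R := by
  classical
  rw [isNoetherianRing_iff_ideal_fg]
  by_contra hnot
  push_neg at hnot
  obtain ⟨I, hI⟩ := hnot
  have hZ : ∀ c ⊆ {I : Ideal R | ¬ I.FG}, IsChain (· ≤ ·) c → ∀ y ∈ c,
      ∃ ub ∈ {I : Ideal R | ¬ I.FG}, ∀ z ∈ c, z ≤ ub := by
    intro c hcs hchain y hy
    refine ⟨sSup c, ?_, fun z hz => le_sSup hz⟩
    intro hfg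
    obtain ⟨T, hT⟩ := hfg
    have hdir : DirectedOn (· ≤ ·) c := hchain.directedOn
    have hgen : ∀ U : Finset R, (↑U : Set R) ⊆ ↑(sSup c : Ideal R) → ∃ J ∈ c, (↑U : Set R) ⊆ J := by
      classical
      intro U
      induction U using Finset.induction_on with
      | empty => exact fun _ => ⟨y, hy, by simp⟩
      | @insert x s hxs ih =>
        intro hins
        obtain ⟨J, hJ, hTJ⟩ := ih (fun t ht => hins (by simp [ht]))
        have hx : x ∈ sSup c := hins (by simp)
        rw [Submodule.mem_sSup_of_directed ⟨y, hy⟩ hdir] at hx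
        obtain ⟨K, hK, hxK⟩ := hx
        obtain ⟨L, hL, hJL, hKL⟩ := hdir J hJ K hK
        refine ⟨L, hL, ?_⟩
        intro t ht
        rcases Finset.mem_insert.1 ht with rfl | hts
        · exact hKL hxK
        · exact hJL (hTJ hts)
    have hex : ∃ J ∈ c, (↑T : Set R) ⊆ J :=
      hgen T (fun t ht => by rw [← hT] at *; exact Ideal.subset_span ht)
    obtain ⟨J, hJc, hTJ⟩ := hex
    have hle : sSup c ≤ J := hT ▸ Ideal.span_le.2 hTJ
    have hJeq : J = sSup c := le_antisymm (le_sSup hJc) hle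
    exact hcs hJc (hJeq ▸ ⟨T, hT⟩)
  obtain ⟨P, -, hPnfg, hPmax⟩ := zorn_le_nonempty₀ {I : Ideal R | ¬ I.FG} hZ I hI
  · -- P is maximal among non-fg ideals; show P prime
    have hPne : P ≠ ⊤ := fun hT => hPnfg (hT ▸ ⟨{1}, by simp⟩)
    have hfg_of_gt : ∀ J : Ideal R, P < J → J.FG := by
      intro J hJ
      by_contra hJn
      exact hJ.ne (le_antisymm hJ.le (hPmax hJn hJ.le))
    have hPprime : P.IsPrime := by
      rw [Ideal.isPrime_iff]
      refine ⟨hPne, ?_⟩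
      intro a b hab
      by_contra hcon
      push_neg at hcon
      obtain ⟨ha, hb⟩ := hcon
      have hJ : (P ⊔ Ideal.span {a}).FG := hfg_of_gt _
        (lt_of_le_of_ne le_sup_left
          (fun he => ha (he ▸ Ideal.mem_sup_right (Ideal.mem_span_singleton_self a))))
      have hbc : b ∈ P.colon (Ideal.span {a}) := by
        rw [Ideal.mem_colon_span_singleton, mul_comm]; exact hab
      have hPleC : P ≤ P.colon (Ideal.span {a}) := fun x hx =>
        Ideal.mem_colon_span_singleton.2 (Ideal.mul_mem_right a P hx)
      have hC : (P.colon (Ideal.span {a})).FG := hfg_of_gt _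
        (lt_of_le_of_ne hPleC (fun he => hb (he.symm ▸ hbc)))
      -- derive P fg
      obtain ⟨T, hT⟩ := hJ
      set C := P.colon (Ideal.span {a}) with hCdef
      have hdec : ∀ t ∈ (T : Set R), ∃ pc : R × R, pc.1 ∈ P ∧ pc.1 + pc.2 * a = t := by
        intro t ht
        have : t ∈ P ⊔ Ideal.span {a} := hT ▸ Ideal.subset_span ht
        rw [Submodule.mem_sup] at this
        obtain ⟨p, hpP, z, hz, hsum⟩ := this
        rw [Ideal.mem_span_singleton'] at hz
        obtain ⟨cz, rfl⟩ := hz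
        exact ⟨(p, cz), hpP, hsum⟩
      choose! pc hpcP hpceq using hdec
      have hPeq : P = Ideal.span ↑(T.image (fun t => (pc t).1)) ⊔ Ideal.span {a} * C := by
        apply le_antisymm
        · intro x hx
          have hxJ : x ∈ Ideal.span (T : Set R) := by
            rw [hT]; exact Ideal.mem_sup_left hx
          have hxJ' : x ∈ Submodule.span R (↑T : Set R) := hxJ
          rw [Submodule.mem_span_finset] at hxJ'
          obtain ⟨f, -, hf⟩ := hxJ'
          have hsplit : x = (∑ t ∈ T, f t * (pc t).1) + (∑ t ∈ T, f t * (pc t).2) * a := by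
            rw [← hf, Finset.sum_mul, ← Finset.sum_add_distrib]
            apply Finset.sum_congr rfl
            intro t ht
            rw [smul_eq_mul,
              show f t * (pc t).1 + f t * (pc t).2 * a = f t * ((pc t).1 + (pc t).2 * a) by ring,
              hpceq t ht]
          have h1 : (∑ t ∈ T, f t * (pc t).1) ∈ Ideal.span ↑(T.image (fun t => (pc t).1)) := by
            apply Ideal.sum_mem
            intro t ht
            exact Ideal.mul_mem_left _ _ (Ideal.subset_span (by
              simp only [Finset.coe_image, Set.mem_image, Finset.mem_coe]
              exact ⟨t, ht, rfl⟩))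
          have hγ : (∑ t ∈ T, f t * (pc t).2) ∈ C := by
            rw [hCdef, Ideal.mem_colon_span_singleton]
            have hPsum : (∑ t ∈ T, f t * (pc t).1) ∈ P :=
              Ideal.sum_mem _ (fun t ht => Ideal.mul_mem_left _ _ (hpcP t ht))
            have : (∑ t ∈ T, f t * (pc t).2) * a = x - (∑ t ∈ T, f t * (pc t).1) := by
              rw [hsplit]; ring
            rw [this]
            exact Ideal.sub_mem _ hx hPsum
          have h2 : (∑ t ∈ T, f t * (pc t).2) * a ∈ Ideal.span {a} * C := by
            have hmm := Ideal.mul_mem_mul (Ideal.mem_span_singleton_self a) hγ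
            rwa [mul_comm a _] at hmm
          rw [hsplit]
          exact Ideal.add_mem _ (Ideal.mem_sup_left h1) (Ideal.mem_sup_right h2)
        · apply sup_le
          · rw [Ideal.span_le]
            intro y hy
            simp only [Finset.coe_image, Set.mem_image, Finset.mem_coe] at hy
            obtain ⟨t, ht, rfl⟩ := hy
            exact hpcP t ht
          · rw [Ideal.mul_le]
            intro r hr s hs
            rw [Ideal.mem_span_singleton'] at hr
            obtain ⟨r', rfl⟩ := hr
            rw [hCdef, Ideal.mem_colon_span_singleton] at hs
            have : r' * a * s = r' * (s * a) := by ring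
            rw [this]
            exact Ideal.mul_mem_left _ _ hs
      exact hPnfg (hPeq ▸ (Submodule.FG.sup ⟨T.image (fun t => (pc t).1), rfl⟩ (Submodule.FG.mul (Submodule.fg_span (Set.finite_singleton a)) hC)))
    exact hPnfg (hp P hPprime)


open Ideal Submodule Set

section helpers

variable {R : Type} [CommRing R] {ι : Type} {w : ι → R}

/-- A fg ideal below a sup of cyclic ideals is below a finite subsup. -/
theorem le_fin {J : Ideal R} (hfg : J.FG) (hle : J ≤ ⨆ i, Ideal.span {w i}) :
    ∃ F : Set ι, F.Finite ∧ J ≤ ⨆ i ∈ F, Ideal.span {w i} := by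
  classical
  obtain ⟨T, hT⟩ := hfg
  have hmem : ∀ t ∈ (T : Set R), ∃ s : Finset ι, t ∈ ⨆ i ∈ s, Ideal.span {w i} := by
    intro t ht
    have : t ∈ ⨆ i, Ideal.span {w i} := hle (hT ▸ Ideal.subset_span ht)
    exact Submodule.mem_iSup_iff_exists_finset.1 this
  choose! s hs using hmem
  refine ⟨⋃ t ∈ (T : Set R), (s t : Set ι), Set.Finite.biUnion T.finite_toSet
    (fun t _ => (s t).finite_toSet), ?_⟩
  rw [← hT, Ideal.span_le]
  intro t ht
  refine (?_ : (⨆ i ∈ s t, Ideal.span {w i}) ≤ _) (hs t ht)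
  refine iSup₂_le fun i hi => ?_
  exact le_iSup₂ (f := fun i (_ : i ∈ ⋃ t ∈ (T : Set R), (s t : Set ι)) => Ideal.span {w i}) i
    (Set.mem_biUnion ht hi)

theorem supp_fin (hind : iSupIndep (fun i => Ideal.span {w i}))
    {P : Ideal R} (hsup : (⨆ i, Ideal.span {w i}) = P) (hfg : P.FG) :
    {i | w i ≠ 0}.Finite := by
  obtain ⟨F, hFfin, hFle⟩ := le_fin hfg hsup.ge
  refine hFfin.subset ?_
  intro i hi
  by_contra hiF
  apply hi
  have h1 : w i ∈ Ideal.span {w i} := Ideal.mem_span_singleton_self _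
  have h2 : w i ∈ ⨆ j, ⨆ (_ : j ≠ i), Ideal.span {w j} := by
    have : w i ∈ ⨆ j ∈ F, Ideal.span {w j} := hFle (hsup ▸ le_iSup (fun j => Ideal.span {w j}) i (Ideal.mem_span_singleton_self (w i)))
    refine (?_ : (⨆ j ∈ F, Ideal.span {w j}) ≤ _) this
    refine iSup₂_le fun j hj => ?_
    exact le_iSup₂ (f := fun j (_ : j ≠ i) => Ideal.span {w j}) j (fun he => hiF (he ▸ hj))
  have := (hind i).le_bot ⟨h1, h2⟩
  simpa using this

theorem fg_of_supp_fin {P : Ideal R} (hsup : (⨆ i, Ideal.span {w i}) = P)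
    (hfin : {i | w i ≠ 0}.Finite) : P.FG := by
  have heq : P = Ideal.span (w '' {i | w i ≠ 0}) := by
    rw [← hsup]
    apply le_antisymm
    · refine iSup_le fun i => ?_
      rw [Ideal.span_le]
      intro x hx
      rw [Set.mem_singleton_iff] at hx
      subst hx
      by_cases hi : w i = 0
      · rw [hi]; exact (Ideal.span _).zero_mem
      · exact Ideal.subset_span ⟨i, hi, rfl⟩
    · rw [Ideal.span_le]
      rintro x ⟨i, -, rfl⟩
      exact le_iSup (fun i => Ideal.span {w i}) i (Ideal.mem_span_singleton_self _)
  rw [heq]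
  exact Submodule.fg_span (hfin.image w)

theorem orth (hind : iSupIndep (fun i => Ideal.span {w i})) {i j : ι} (hij : i ≠ j) :
    w i * w j = 0 := by
  have h1 : w i * w j ∈ Ideal.span {w i} :=
    Ideal.mul_mem_right _ _ (Ideal.mem_span_singleton_self _)
  have h2 : w i * w j ∈ ⨆ l, ⨆ (_ : l ≠ i), Ideal.span {w l} := by
    have : w i * w j ∈ Ideal.span {w j} :=
      Ideal.mul_mem_left _ _ (Ideal.mem_span_singleton_self _)
    exact (le_iSup₂ (f := fun l (_ : l ≠ i) => Ideal.span {w l}) j (Ne.symm hij)) this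
  simpa using (hind i).le_bot ⟨h1, h2⟩

end helpers

theorem prime_fg {R : Type} [CommRing R]
    (hsemi : {I : Ideal R | I.IsMaximal}.Finite)
    (hm : ∀ M : Ideal R, M.IsMaximal → M.FG)
    (h : ∀ P : Ideal R, P.IsPrime → IsDirectSumOfCyclics P)
    (P : Ideal R) (hP : P.IsPrime) : P.FG := by
  classical
  obtain ⟨ι, w, hwmem, hwind, hwsup⟩ := h P hP
  by_cases hfin : {i | w i ≠ 0}.Finite
  · exact fg_of_supp_fin hwsup hfin
  exfalso
  have hPnfg : ¬ P.FG := fun hfg => hfin (supp_fin hwind hwsup hfg)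
  have hPsplit : ∀ i : ι, P ≤ Ideal.span {w i} ⊔ (⨆ j, ⨆ (_ : j ≠ i), Ideal.span {w j}) := by
    intro i
    rw [← hwsup]
    refine iSup_le fun j => ?_
    by_cases hj : j = i
    · subst hj; exact le_sup_left
    · exact le_trans (le_iSup₂ (f := fun j (_ : j ≠ i) => Ideal.span {w j}) j hj) le_sup_right
  -- per-maximal data
  have hclaim : ∀ M : Ideal R, M.IsMaximal → P ≤ M →
      ∃ (F : Set ι) (wM : R), F.Finite ∧ wM ∈ M ∧ wM ∉ P ∧
        ∀ i ∉ F, ∃ c : R, (1 - c * wM) * w i = 0 := by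
    intro M hMmax hPM
    obtain ⟨κ, u, humem, huind, husup⟩ := h M hMmax.isPrime
    have hMfg : M.FG := hm M hMmax
    have hufin : {k | u k ≠ 0}.Finite := supp_fin huind husup hMfg
    by_cases hall : ∀ k, u k ∈ P
    · refine absurd ?_ hPnfg
      have hMle : M ≤ P := by
        rw [← husup]
        exact iSup_le fun k => (Ideal.span_singleton_le_iff_mem _).2 (hall k)
      exact (le_antisymm hPM hMle : P = M) ▸ hMfg
    push_neg at hall
    obtain ⟨k0, hk0⟩ := hall
    have huniq : ∀ k, k ≠ k0 → u k ∈ P := by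
      intro k hk
      have h0 : u k * u k0 = 0 := orth huind hk
      rcases hP.mem_or_mem (show u k * u k0 ∈ P by rw [h0]; exact P.zero_mem) with h' | h'
      · exact h'
      · exact absurd h' hk0
    set Q0 : Ideal R := Ideal.span (u '' ({k | u k ≠ 0} \ {k0})) with hQ0
    have hQ0fg : Q0.FG := Submodule.fg_span (hufin.diff.image u)
    have hQ0P : Q0 ≤ P := by
      rw [hQ0, Ideal.span_le]
      rintro x ⟨k, hk, rfl⟩
      exact huniq k (fun he => hk.2 (by rw [he]; exact rfl))
    have hMle : M ≤ Q0 ⊔ Ideal.span {u k0} := by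
      rw [← husup]
      refine iSup_le fun k => ?_
      by_cases hk : k = k0
      · subst hk; exact le_sup_right
      · by_cases hknz : u k = 0
        · rw [hknz, Ideal.span_singleton_eq_bot.2 rfl]; exact bot_le
        · refine le_trans ?_ le_sup_left
          rw [Ideal.span_singleton_le_iff_mem]
          exact Ideal.subset_span ⟨k, ⟨hknz, hk⟩, rfl⟩
    obtain ⟨F, hFfin, hFle⟩ := le_fin hQ0fg (hQ0P.trans hwsup.ge)
    refine ⟨F, u k0, hFfin, humem k0, hk0, ?_⟩
    intro i hiF
    have hwiM : w i ∈ Q0 ⊔ Ideal.span {u k0} := hMle (hPM (hwmem i))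
    rw [Submodule.mem_sup] at hwiM
    obtain ⟨q, hq, z, hz, heq1⟩ := hwiM
    rw [Ideal.mem_span_singleton'] at hz
    obtain ⟨r, rfl⟩ := hz
    have hrP : r ∈ P := by
      have hru : r * u k0 ∈ P := by
        have : r * u k0 = w i - q := by linear_combination heq1
        rw [this]; exact Ideal.sub_mem _ (hwmem i) (hQ0P hq)
      rcases hP.mem_or_mem hru with h' | h'
      · exact h'
      · exact absurd h' hk0
    have hrP' := hPsplit i hrP
    rw [Submodule.mem_sup] at hrP'
    obtain ⟨x1, hx1, r', hr', heq2⟩ := hrP'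
    rw [Ideal.mem_span_singleton'] at hx1
    obtain ⟨c, rfl⟩ := hx1
    refine ⟨c, ?_⟩
    have hkey : (1 - c * u k0) * w i = q + r' * u k0 := by
      linear_combination -heq1 - u k0 * heq2
    have hmem1 : (1 - c * u k0) * w i ∈ Ideal.span {w i} :=
      Ideal.mem_span_singleton'.2 ⟨1 - c * u k0, rfl⟩
    have hQ0Ti : Q0 ≤ ⨆ j, ⨆ (_ : j ≠ i), Ideal.span {w j} := by
      refine hFle.trans (iSup₂_le fun j hj => ?_)
      exact le_iSup₂ (f := fun j (_ : j ≠ i) => Ideal.span {w j}) j (fun he => hiF (he ▸ hj))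
    have hmem2 : (1 - c * u k0) * w i ∈ ⨆ j, ⨆ (_ : j ≠ i), Ideal.span {w j} := by
      rw [hkey]
      exact Ideal.add_mem _ (hQ0Ti hq) (Ideal.mul_mem_right _ _ hr')
    have := (hwind i).le_bot ⟨hmem1, hmem2⟩
    simpa using this
  -- choose data for every maximal over P
  have hclaim' : ∀ M : Ideal R, ∃ (F : Set ι) (wM : R), (M.IsMaximal ∧ P ≤ M) →
      (F.Finite ∧ wM ∈ M ∧ wM ∉ P ∧ ∀ i ∉ F, ∃ c : R, (1 - c * wM) * w i = 0) := by
    intro M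
    by_cases hM : M.IsMaximal ∧ P ≤ M
    · obtain ⟨F, wM, hprops⟩ := hclaim M hM.1 hM.2
      exact ⟨F, wM, fun _ => hprops⟩
    · exact ⟨∅, 0, fun hc => absurd hc hM⟩
  choose F wM hF using hclaim'
  set Fbig : Set ι := ⋃ M ∈ {M : Ideal R | M.IsMaximal ∧ P ≤ M}, F M with hFbig
  have hMsfin : {M : Ideal R | M.IsMaximal ∧ P ≤ M}.Finite :=
    hsemi.subset (fun M hM => hM.1)
  have hFbigfin : Fbig.Finite :=
    Set.Finite.biUnion hMsfin (fun M hM => (hF M hM).1)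
  have hS'inf : ({i | w i ≠ 0} \ Fbig).Infinite := Set.Infinite.diff hfin hFbigfin
  -- idempotents
  have hidem : ∀ i : ι, ∃ er : R × R, i ∈ {i | w i ≠ 0} \ Fbig →
      (er.1 = er.2 * w i ∧ er.1 ≠ 0 ∧ er.1 * er.1 = er.1) := by
    intro i
    by_cases hiS : i ∈ {i | w i ≠ 0} \ Fbig
    swap
    · exact ⟨(0, 0), fun hc => absurd hc hiS⟩
    obtain ⟨hine, hiF⟩ := hiS
    set A : Ideal R := (⊥ : Ideal R).colon (Ideal.span {w i}) with hA
    have hAmem : ∀ r : R, r ∈ A ↔ r * w i = 0 := fun r => by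
      rw [hA, Ideal.mem_colon_span_singleton]
      exact ⟨fun hh => by simpa using hh, fun hh => by simp [hh]⟩
    have hPB : P ≤ A ⊔ Ideal.span {w i} := by
      intro x hx
      have hx' := hPsplit i hx
      rw [Submodule.mem_sup] at hx'
      obtain ⟨x1, hx1, r'', hr'', heqx⟩ := hx'
      rw [Ideal.mem_span_singleton'] at hx1
      obtain ⟨c, rfl⟩ := hx1
      have hr0 : r'' * w i = 0 := by
        have hm1 : r'' * w i ∈ Ideal.span {w i} := Ideal.mem_span_singleton'.2 ⟨r'', rfl⟩
        have hm2 : r'' * w i ∈ ⨆ j, ⨆ (_ : j ≠ i), Ideal.span {w j} :=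
          Ideal.mul_mem_right _ _ hr''
        have := (hwind i).le_bot ⟨hm1, hm2⟩
        simpa using this
      have : x = r'' + c * w i := by linear_combination -heqx
      rw [this]
      exact Ideal.add_mem _ (Ideal.mem_sup_left ((hAmem r'').2 hr0))
        (Ideal.mem_sup_right (Ideal.mem_span_singleton'.2 ⟨c, rfl⟩))
    have hBtop : A ⊔ Ideal.span {w i} = ⊤ := by
      by_contra hne
      obtain ⟨M, hMmax, hBM⟩ := Ideal.exists_le_maximal _ hne
      have hPM : P ≤ M := hPB.trans hBM
      obtain ⟨hFMfin, hwMM, hwMP, hc⟩ := hF M ⟨hMmax, hPM⟩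
      have hiFM : i ∉ F M := fun hin => hiF
        (Set.mem_biUnion (show M ∈ {M : Ideal R | M.IsMaximal ∧ P ≤ M} from ⟨hMmax, hPM⟩) hin)
      obtain ⟨c, hc0⟩ := hc i hiFM
      have h1M : (1 : R) - c * wM M ∈ M := hBM (Ideal.mem_sup_left ((hAmem _).2 hc0))
      have hone : (1 : R) ∈ M := by
        have := Ideal.add_mem M h1M (Ideal.mul_mem_left M c hwMM)
        simpa using this
      exact hMmax.ne_top ((Ideal.eq_top_iff_one M).2 hone)
    have h1 : (1 : R) ∈ A ⊔ Ideal.span {w i} := hBtop ▸ Submodule.mem_top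
    rw [Submodule.mem_sup] at h1
    obtain ⟨α, hα, z, hz, h1eq⟩ := h1
    rw [Ideal.mem_span_singleton'] at hz
    obtain ⟨r, rfl⟩ := hz
    have hα0 : α * w i = 0 := (hAmem α).1 hα
    have hwi : w i = (r * w i) * w i := by
      linear_combination (-(w i)) * h1eq + hα0
    refine ⟨(r * w i, r), fun _ => ⟨rfl, ?_, ?_⟩⟩
    · intro he
      have he' : r * w i = 0 := he
      exact hine (by rw [hwi, he', zero_mul])
    · linear_combination (r * w i) * h1eq - r * hα0
  choose er her using hidem
  set e : ι → R := fun i => (er i).1 with he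
  set Sbad : Set ι := {i | i ∈ {i | w i ≠ 0} \ Fbig ∧ ∃ M : Ideal R, M.IsMaximal ∧ e i ∉ M}
    with hSbad
  have hchoice : ∀ i : ι, ∃ M : Ideal R, i ∈ Sbad → (M.IsMaximal ∧ e i ∉ M) := by
    intro i
    by_cases hi : i ∈ Sbad
    · obtain ⟨-, M, hM⟩ := hi
      exact ⟨M, fun _ => hM⟩
    · exact ⟨⊤, fun hc => absurd hc hi⟩
  choose φ hφ using hchoice
  have hinj : Set.InjOn φ Sbad := by
    intro i hi j hj hijeq
    by_contra hne
    have hij0 : e i * e j = 0 := by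
      obtain ⟨h1i, -, -⟩ := her i hi.1
      obtain ⟨h1j, -, -⟩ := her j hj.1
      show (er i).1 * (er j).1 = 0
      rw [h1i, h1j]
      have horth := orth hwind hne
      linear_combination (er i).2 * (er j).2 * horth
    have hMmax := (hφ i hi).1
    rcases hMmax.isPrime.mem_or_mem (show e i * e j ∈ φ i by rw [hij0]; exact (φ i).zero_mem)
      with h' | h'
    · exact (hφ i hi).2 h'
    · rw [hijeq] at h'
      exact (hφ j hj).2 h'
  have hSbadfin : Sbad.Finite := by
    have himg : φ '' Sbad ⊆ {I : Ideal R | I.IsMaximal} := by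
      rintro x ⟨i, hi, rfl⟩
      exact (hφ i hi).1
    exact Set.Finite.of_finite_image (hsemi.subset himg) hinj
  obtain ⟨i, hiS', hiBad⟩ : ∃ i, i ∈ {i | w i ≠ 0} \ Fbig ∧ i ∉ Sbad := by
    obtain ⟨i, hi⟩ := (hS'inf.diff hSbadfin).nonempty
    exact ⟨i, hi.1, hi.2⟩
  obtain ⟨heform, heine, heidem⟩ := her i hiS'
  have heiJ : ∀ M : Ideal R, M.IsMaximal → e i ∈ M := by
    intro M hM
    by_contra hc
    exact hiBad ⟨hiS', M, hM, hc⟩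
  have hspan : Ideal.span {1 - e i} = ⊤ := by
    by_contra hne
    obtain ⟨M, hMmax, hle⟩ := Ideal.exists_le_maximal _ hne
    have h1 : 1 - e i ∈ M := hle (Ideal.mem_span_singleton_self _)
    have h2 : e i ∈ M := heiJ M hMmax
    exact hMmax.ne_top ((Ideal.eq_top_iff_one M).2 (by simpa using Ideal.add_mem M h1 h2))
  have h1mem : (1 : R) ∈ Ideal.span {1 - e i} := hspan ▸ Submodule.mem_top
  rw [Ideal.mem_span_singleton'] at h1mem
  obtain ⟨t, ht⟩ := h1mem
  have he0 : e i = 0 := by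
    have heidem' : e i * e i = e i := heidem
    linear_combination (-(e i)) * ht - t * heidem'
  exact heine he0

theorem noetherian_iff_maximals_fg
    {R : Type} [CommRing R]
    (hsemi : {I : Ideal R | I.IsMaximal}.Finite)
    (h : ∀ P : Ideal R, P.IsPrime → IsDirectSumOfCyclics P) :
    IsNoetherianRing R ↔ ∀ M : Ideal R, M.IsMaximal → M.FG := by
  constructor
  · intro hN M _
    exact (isNoetherianRing_iff_ideal_fg R).1 hN M
  · intro hmax
    exact cohen' (fun P hP => prime_fg hsemi hmax h P hP)
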